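/- Let f_t = f_{z_t,ẑ_t} for t ≥ 1 be instantaneous SGTSVM objectives, let (u_t) be generated by the SGTSVM iteration u_{t+1} = u_t − (1/t)∇_t where ∇_t is the subgradient vector of f_t at u_t, with ‖∇_t‖ ≤ G2 for all t, and suppose the sequence (u_t) converges in ℝ^d. Let u* be a minimizer of the TWSVM objective f. Then for every ε > 0 there exists T0 such that for all T ≥ T0, (1/T)·Σ_{t=1}^T f_t(u_t) ≤ (1/T)·Σ_{t=1}^T f_t(u*) + ε. -/

import Mathlib

open RealInnerProductSpace Finset Filter

lemma sgtsvm_subgrad {d : ℕ} (c1 c2 : ℝ) (hc1 : 0 ≤ c1) (hc2 : 0 ≤ c2)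
    (zt zh v x : EuclideanSpace ℝ (Fin d)) :
    ((1 / 2) * ‖v‖ ^ 2 + (c1 / 2) * ⟪v, zt⟫ ^ 2 + c2 * max 0 (1 + ⟪v, zh⟫))
      - ((1 / 2) * ‖x‖ ^ 2 + (c1 / 2) * ⟪x, zt⟫ ^ 2 + c2 * max 0 (1 + ⟪x, zh⟫))
    ≤ ⟪v + (c1 * ⟪v, zt⟫) • zt + (if 0 < 1 + ⟪v, zh⟫ then c2 else 0) • zh, v - x⟫ := by
  have hexp : ⟪v + (c1 * ⟪v, zt⟫) • zt + (if 0 < 1 + ⟪v, zh⟫ then c2 else 0) • zh, v - x⟫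
      = ⟪v, v - x⟫ + (c1 * ⟪v, zt⟫) * ⟪zt, v - x⟫
        + (if 0 < 1 + ⟪v, zh⟫ then c2 else 0) * ⟪zh, v - x⟫ := by
    rw [inner_add_left, inner_add_left, real_inner_smul_left, real_inner_smul_left]
  rw [hexp]
  have e1 : ⟪v, v - x⟫ = ‖v‖ ^ 2 - ⟪v, x⟫ := by
    rw [inner_sub_right, real_inner_self_eq_norm_sq]
  have e2 : ⟪zt, v - x⟫ = ⟪v, zt⟫ - ⟪x, zt⟫ := by
    rw [inner_sub_right, real_inner_comm zt v, real_inner_comm zt x]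
  have e3 : ⟪zh, v - x⟫ = ⟪v, zh⟫ - ⟪x, zh⟫ := by
    rw [inner_sub_right, real_inner_comm zh v, real_inner_comm zh x]
  rw [e1, e2, e3]
  have h1 : (1 / 2) * ‖v‖ ^ 2 - (1 / 2) * ‖x‖ ^ 2 ≤ ‖v‖ ^ 2 - ⟪v, x⟫ := by
    have hvx : ⟪v, x⟫ ≤ ‖v‖ * ‖x‖ := real_inner_le_norm v x
    nlinarith [sq_nonneg (‖v‖ - ‖x‖)]
  have h2 : (c1 / 2) * ⟪v, zt⟫ ^ 2 - (c1 / 2) * ⟪x, zt⟫ ^ 2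
      ≤ (c1 * ⟪v, zt⟫) * (⟪v, zt⟫ - ⟪x, zt⟫) := by
    nlinarith [sq_nonneg (⟪v, zt⟫ - ⟪x, zt⟫)]
  have h3 : c2 * max 0 (1 + ⟪v, zh⟫) - c2 * max 0 (1 + ⟪x, zh⟫)
      ≤ (if 0 < 1 + ⟪v, zh⟫ then c2 else 0) * (⟪v, zh⟫ - ⟪x, zh⟫) := by
    by_cases hpos : 0 < 1 + ⟪v, zh⟫
    · rw [if_pos hpos, max_eq_right hpos.le]
      have : 1 + ⟪x, zh⟫ ≤ max 0 (1 + ⟪x, zh⟫) := le_max_right _ _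
      nlinarith
    · rw [if_neg hpos, max_eq_left (by linarith [not_lt.mp hpos])]
      have : 0 ≤ max 0 (1 + ⟪x, zh⟫) := le_max_left _ _
      nlinarith
  linarith

lemma sgtsvm_telescope (a : ℕ → ℝ) :
    ∀ T : ℕ, ∑ t ∈ Finset.Icc 1 T, (t : ℝ) * (a t - a (t + 1))
      = ∑ t ∈ Finset.Icc 1 T, a t - (T : ℝ) * a (T + 1) := by
  intro T
  induction T with
  | zero => simp
  | succ n ih =>
    rw [← Finset.insert_Icc_right_eq_Icc_add_one (by omega), Finset.sum_insert (by simp),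
        Finset.sum_insert (by simp), ih]
    push_cast
    ring

lemma sgtsvm_icc_to_range (h : ℕ → ℝ) (T : ℕ) :
    ∑ t ∈ Finset.Icc 1 T, h t = ∑ i ∈ Finset.range T, h (1 + i) := by
  rw [← Finset.Ico_add_one_right_eq_Icc, Finset.sum_Ico_eq_sum_range]
  simp

theorem sgtsvm_average_objective_eventually_small
    (d m1 m2 : ℕ) (hm1 : 0 < m1) (hm2 : 0 < m2)
    (c1 c2 : ℝ) (hc1 : 0 < c1) (hc2 : 0 < c2)
    (Z1 : Fin m1 → EuclideanSpace ℝ (Fin d)) (Z2 : Fin m2 → EuclideanSpace ℝ (Fin d))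
    (z zhat : ℕ → EuclideanSpace ℝ (Fin d))
    (hzmem : ∀ t, 1 ≤ t → ∃ i, z t = Z1 i)
    (hzhmem : ∀ t, 1 ≤ t → ∃ j, zhat t = Z2 j)
    -- the instantaneous SGTSVM objectives f_t = f_{z_t, ẑ_t}
    (f : ℕ → EuclideanSpace ℝ (Fin d) → ℝ)
    (hf : ∀ t x, f t x = (1 / 2) * ‖x‖ ^ 2 + (c1 / 2) * ⟪x, z t⟫ ^ 2
        + c2 * max 0 (1 + ⟪x, zhat t⟫))
    -- the SGTSVM iteration with the subgradient vector ∇_t of f_t at u_t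
    (u g : ℕ → EuclideanSpace ℝ (Fin d))
    (hg : ∀ t, 1 ≤ t →
      g t = u t + (c1 * ⟪u t, z t⟫) • z t
        + (if 0 < 1 + ⟪u t, zhat t⟫ then c2 else 0) • zhat t)
    (hstep : ∀ t, 1 ≤ t → u (t + 1) = u t - (1 / (t : ℝ)) • g t)
    (G2 : ℝ) (hgb : ∀ t, 1 ≤ t → ‖g t‖ ≤ G2)
    (hlim : ∃ L : EuclideanSpace ℝ (Fin d), Tendsto u atTop (nhds L))
    -- the TWSVM objective and its minimizer u*
    (F : EuclideanSpace ℝ (Fin d) → ℝ)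
    (hF : ∀ x, F x = (1 / 2) * ‖x‖ ^ 2
        + (c1 / (2 * (m1 : ℝ))) * ∑ i, ⟪x, Z1 i⟫ ^ 2
        + (c2 / (m2 : ℝ)) * ∑ j, max 0 (1 + ⟪x, Z2 j⟫))
    (ustar : EuclideanSpace ℝ (Fin d)) (hmin : ∀ x, F ustar ≤ F x)
    (ε : ℝ) (hε : 0 < ε) :
    ∃ T0 : ℕ, ∀ T, T0 ≤ T →
      (1 / (T : ℝ)) * ∑ t ∈ Finset.Icc 1 T, f t (u t)
        ≤ (1 / (T : ℝ)) * ∑ t ∈ Finset.Icc 1 T, f t ustar + ε := by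
  obtain ⟨L, hL⟩ := hlim
  set a : ℕ → ℝ := fun t => ‖u t - ustar‖ ^ 2 with ha
  -- per-step bound on the inner product
  have hkey : ∀ t, 1 ≤ t → ⟪g t, u t - ustar⟫
      ≤ ((t : ℝ) / 2) * (a t - a (t + 1)) + (1 / (2 * (t : ℝ))) * G2 ^ 2 := by
    intro t ht
    have ht0 : (0 : ℝ) < t := by exact_mod_cast ht
    have h1 : u (t + 1) - ustar = (u t - ustar) - (1 / (t : ℝ)) • g t := by
      rw [hstep t ht, sub_right_comm]
    have h2 : a (t + 1) = a t - 2 * ((1 / (t : ℝ)) * ⟪u t - ustar, g t⟫)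
        + ((1 / (t : ℝ)) * ‖g t‖) ^ 2 := by
      simp only [ha]
      rw [h1, norm_sub_sq_real, real_inner_smul_right, norm_smul]
      simp [abs_of_pos (by positivity : (0:ℝ) < 1 / (t:ℝ))]
    have hg2 : ‖g t‖ ^ 2 ≤ G2 ^ 2 := by
      nlinarith [hgb t ht, norm_nonneg (g t)]
    have hcomm : ⟪g t, u t - ustar⟫ = ⟪u t - ustar, g t⟫ := real_inner_comm _ _
    rw [hcomm]
    have ht' : (t : ℝ) ≠ 0 := ne_of_gt ht0
    have hId : ⟪u t - ustar, g t⟫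
        = ((t : ℝ) / 2) * (a t - a (t + 1)) + (1 / (2 * (t : ℝ))) * ‖g t‖ ^ 2 := by
      field_simp at h2 ⊢
      nlinarith [h2]
    rw [hId]
    have : (0:ℝ) ≤ 1 / (2 * (t : ℝ)) := by positivity
    nlinarith
  have hG2 : 0 ≤ G2 := le_trans (norm_nonneg _) (hgb 1 le_rfl)
  -- summed bound
  have hsum : ∀ T : ℕ, ∑ t ∈ Finset.Icc 1 T, f t (u t) - ∑ t ∈ Finset.Icc 1 T, f t ustar
      ≤ (1 / 2) * (∑ t ∈ Finset.Icc 1 T, a t - (T : ℝ) * a (T + 1))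
        + (G2 ^ 2 / 2) * ∑ t ∈ Finset.Icc 1 T, (1 / (t : ℝ)) := by
    intro T
    rw [← Finset.sum_sub_distrib]
    have hle : ∑ t ∈ Finset.Icc 1 T, (f t (u t) - f t ustar)
        ≤ ∑ t ∈ Finset.Icc 1 T,
            (((t : ℝ) / 2) * (a t - a (t + 1)) + (1 / (2 * (t : ℝ))) * G2 ^ 2) := by
      apply Finset.sum_le_sum
      intro t htm
      have ht1 : 1 ≤ t := (Finset.mem_Icc.mp htm).1
      have hsub := sgtsvm_subgrad c1 c2 hc1.le hc2.le (z t) (zhat t) (u t) ustar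
      rw [← hf t (u t), ← hf t ustar, ← hg t ht1] at hsub
      exact le_trans hsub (hkey t ht1)
    refine le_trans hle ?_
    rw [Finset.sum_add_distrib]
    have e1 : ∑ t ∈ Finset.Icc 1 T, ((t : ℝ) / 2) * (a t - a (t + 1))
        = (1 / 2) * (∑ t ∈ Finset.Icc 1 T, a t - (T : ℝ) * a (T + 1)) := by
      rw [← sgtsvm_telescope a T, Finset.mul_sum]
      exact Finset.sum_congr rfl fun t _ => by ring
    have e2 : ∑ t ∈ Finset.Icc 1 T, (1 / (2 * (t : ℝ))) * G2 ^ 2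
        = (G2 ^ 2 / 2) * ∑ t ∈ Finset.Icc 1 T, (1 / (t : ℝ)) := by
      rw [Finset.mul_sum]
      exact Finset.sum_congr rfl fun t _ => by ring
    rw [e1, e2]
  -- limits
  have hta : Tendsto a atTop (nhds (‖L - ustar‖ ^ 2)) := by
    exact ((hL.sub tendsto_const_nhds).norm).pow 2
  have hta' : Tendsto (fun T => a (1 + T)) atTop (nhds (‖L - ustar‖ ^ 2)) :=
    hta.comp (tendsto_add_atTop_nat 1 |>.congr (fun n => by omega))
  have t1 : Tendsto (fun T : ℕ => ((T : ℝ))⁻¹ * ∑ i ∈ Finset.range T, a (1 + i))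
      atTop (nhds (‖L - ustar‖ ^ 2)) := hta'.cesaro
  have t2 : Tendsto (fun T : ℕ => a (T + 1)) atTop (nhds (‖L - ustar‖ ^ 2)) :=
    hta.comp (tendsto_add_atTop_nat 1)
  have t3small : Tendsto (fun i : ℕ => 1 / ((1 + i : ℕ) : ℝ)) atTop (nhds 0) := by
    have := tendsto_one_div_add_atTop_nhds_zero_nat (𝕜 := ℝ)
    refine this.congr fun n => ?_
    push_cast; ring_nf
  have t3 : Tendsto (fun T : ℕ => ((T : ℝ))⁻¹ * ∑ i ∈ Finset.range T, 1 / ((1 + i : ℕ) : ℝ))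
      atTop (nhds 0) := t3small.cesaro
  set B : ℕ → ℝ := fun T =>
    (1 / 2) * (((T : ℝ))⁻¹ * ∑ i ∈ Finset.range T, a (1 + i)) - (1 / 2) * a (T + 1)
      + (G2 ^ 2 / 2) * (((T : ℝ))⁻¹ * ∑ i ∈ Finset.range T, 1 / ((1 + i : ℕ) : ℝ)) with hB
  have hBlim' : Tendsto B atTop (nhds ((1/2) * (‖L - ustar‖ ^ 2)
      - (1/2) * (‖L - ustar‖ ^ 2) + (G2 ^ 2 / 2) * 0)) :=
    ((t1.const_mul ((1:ℝ)/2)).sub (t2.const_mul ((1:ℝ)/2))).add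
      (t3.const_mul (G2 ^ 2 / 2))
  have hBlim : Tendsto B atTop (nhds 0) := by
    have hz : (1/2) * (‖L - ustar‖ ^ 2) - (1/2) * (‖L - ustar‖ ^ 2)
        + (G2 ^ 2 / 2) * 0 = 0 := by ring
    rwa [hz] at hBlim'
  have hev : ∀ᶠ T in atTop, B T < ε := hBlim.eventually (gt_mem_nhds hε)
  obtain ⟨T1, hT1⟩ := eventually_atTop.mp hev
  refine ⟨max T1 1, fun T hT => ?_⟩
  have hT1' : T1 ≤ T := le_trans (le_max_left _ _) hT
  have hTpos : 1 ≤ T := le_trans (le_max_right _ _) hT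
  have hTr : (0 : ℝ) < T := by exact_mod_cast hTpos
  have hbound := hsum T
  -- rewrite Icc sums as range sums
  rw [sgtsvm_icc_to_range a T, sgtsvm_icc_to_range (fun t => 1 / (t : ℝ)) T] at hbound
  have hcast : ∑ i ∈ Finset.range T, (1 : ℝ) / ((1 + i : ℕ) : ℝ)
      = ∑ i ∈ Finset.range T, 1 / (((1 + i : ℕ) : ℝ)) := rfl
  have hkey2 : (1 / (T : ℝ)) * (∑ t ∈ Finset.Icc 1 T, f t (u t)
      - ∑ t ∈ Finset.Icc 1 T, f t ustar) ≤ B T := by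
    have hmul := mul_le_mul_of_nonneg_left hbound (by positivity : (0:ℝ) ≤ 1 / (T : ℝ))
    refine le_trans hmul (le_of_eq ?_)
    rw [hB]
    have hne : (T : ℝ) ≠ 0 := ne_of_gt hTr
    push_cast
    field_simp
  have hlt := hT1 T hT1'
  have hfin : (1 / (T : ℝ)) * (∑ t ∈ Finset.Icc 1 T, f t (u t)
      - ∑ t ∈ Finset.Icc 1 T, f t ustar) ≤ ε := le_of_lt (lt_of_le_of_lt hkey2 hlt)
  nlinarith [hfin]
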